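/- Let C be a salient closed convex cone in ℝⁿ and let A₁, …, Aₘ be closed convex nonempty subsets of C \ {0}, each with recession cone equal to C. Then the intersection A₁ ∩ ⋯ ∩ Aₘ is nonempty. -/

import Mathlib

open Pointwise

/-- If `C` is a salient closed convex cone in `ℝⁿ` and `A₁, …, Aₘ` are closed convex
nonempty subsets of `C \ {0}`, each with recession cone equal to `C`, then
`A₁ ∩ ⋯ ∩ Aₘ` is nonempty. -/
theorem iInter_nonempty_of_recessionCone_eq_cone
    (n : ℕ) (C : Set (EuclideanSpace ℝ (Fin n)))
    (hCclosed : IsClosed C) (hCconv : Convex ℝ C)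
    (hCcone : ∀ t : ℝ, 0 < t → t • C ⊆ C)
    (hCsalient : ∀ x ∈ C, -x ∈ C → x = 0)
    (m : ℕ) (A : Fin m → Set (EuclideanSpace ℝ (Fin n)))
    (hAclosed : ∀ i, IsClosed (A i)) (hAconv : ∀ i, Convex ℝ (A i))
    (hAne : ∀ i, (A i).Nonempty)
    (hAsub : ∀ i, A i ⊆ C \ {0})
    (hArec : ∀ i, {d | ∀ x ∈ A i, x + d ∈ A i} = C) :
    (⋂ i, A i).Nonempty := by
  rcases Nat.eq_zero_or_pos m with hm | hm
  · subst hm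
    simp [Set.iInter_of_empty]
  · choose a ha using hAne
    have h0C : (0 : EuclideanSpace ℝ (Fin n)) ∈ C := by
      obtain ⟨i⟩ := Fin.pos_iff_nonempty.mp hm
      rw [← hArec i]
      intro x hx
      simpa using hx
    have haddC : ∀ x ∈ C, ∀ y ∈ C, x + y ∈ C := by
      intro x hx y hy
      have h := hCconv hx hy (by norm_num : (0:ℝ) ≤ 1/2) (by norm_num : (0:ℝ) ≤ 1/2)
        (by norm_num)
      have h2 := hCcone 2 (by norm_num) (Set.smul_mem_smul_set (a := 2) h)
      have : (2 : ℝ) • ((1/2 : ℝ) • x + (1/2 : ℝ) • y) = x + y := by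
        rw [smul_add, smul_smul, smul_smul]
        norm_num
      rwa [this] at h2
    have haC : ∀ j, a j ∈ C := fun j => (hAsub j (ha j)).1
    have hsumC : ∀ s : Finset (Fin m), ∑ j ∈ s, a j ∈ C := by
      intro s
      induction s using Finset.induction_on with
      | empty => simpa using h0C
      | insert j s hj ih =>
        rw [Finset.sum_insert hj]
        exact haddC _ (haC _) _ ih
    refine ⟨∑ j, a j, Set.mem_iInter.2 fun i => ?_⟩
    have hsplit : ∑ j, a j = a i + ∑ j ∈ Finset.univ.erase i, a j :=
      (Finset.add_sum_erase _ _ (Finset.mem_univ i)).symm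
    rw [hsplit]
    have hd : ∑ j ∈ Finset.univ.erase i, a j ∈ C := hsumC _
    rw [← hArec i] at hd
    exact hd (a i) (ha i)
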